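/- arXiv:2509.22417 — 2 statements merged into one kernel-verified Lean document; each statement's English description precedes it below -/
import Mathlib

section
/- Let A₁, …, A_D ∈ SL(2,ℝ) all be hyperbolic and suppose the family A₁, …, A_D satisfies the source-sink condition. Then the family A₁, …, A_D has an invariant cone. -/
open Matrix

noncomputable section

/-- Euclidean plane. -/
abbrev E2 := EuclideanSpace ℝ (Fin 2)

/-- The real projective line, as the projectivization of `ℝ²`. -/
abbrev RP1 := Projectivization ℝ E2

/-- The linear map on `E2` induced by a `2×2` matrix. -/
def matLin (A : Matrix (Fin 2) (Fin 2) ℝ) : E2 →ₗ[ℝ] E2 :=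
  (WithLp.linearEquiv 2 ℝ (Fin 2 → ℝ)).symm.toLinearMap ∘ₗ
    A.mulVecLin ∘ₗ (WithLp.linearEquiv 2 ℝ (Fin 2 → ℝ)).toLinearMap

/-- Matrix-vector multiplication on `E2`. -/
def mulVecE (A : Matrix (Fin 2) (Fin 2) ℝ) (v : E2) : E2 := matLin A v

/-- The action of an (invertible) matrix on the projective line `RP1`
(junk value if the matrix is not injective). -/
def matAct (A : Matrix (Fin 2) (Fin 2) ℝ) (x : RP1) : RP1 :=
  open scoped Classical in
  if h : Function.Injective (matLin A) then Projectivization.map (matLin A) h x else x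

/-- The (Euclidean) operator norm of a `2×2` matrix. -/
def matOpNorm (A : Matrix (Fin 2) (Fin 2) ℝ) : ℝ :=
  ‖LinearMap.toContinuousLinearMap (matLin A)‖

/-- The metric `d([u],[w]) = √(1 − (⟨u,w⟩/(‖u‖‖w‖))²)` on `RP1`. -/
def projDist (x y : RP1) : ℝ :=
  Real.sqrt (1 - ((inner ℝ x.rep y.rep : ℝ) / (‖x.rep‖ * ‖y.rep‖)) ^ 2)

/-- Forward cocycle iterates: `fwd A n i = A(i+n−1)⋯A(i)`. -/
def fwd (A : ℤ → Matrix (Fin 2) (Fin 2) ℝ) : ℕ → ℤ → Matrix (Fin 2) (Fin 2) ℝ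
  | 0, _ => 1
  | n + 1, i => A (i + n) * fwd A n i

/-- Backward cocycle iterates: `bwd A n i = A(i−n)⁻¹⋯A(i−1)⁻¹`. -/
def bwd (A : ℤ → Matrix (Fin 2) (Fin 2) ℝ) : ℕ → ℤ → Matrix (Fin 2) (Fin 2) ℝ
  | 0, _ => 1
  | n + 1, i => bwd A n (i - 1) * (A (i - 1))⁻¹

/-- `w` is a nonzero vector spanning the line `x ∈ RP1`. -/
def SpansLine (w : E2) (x : RP1) : Prop := ∃ h : w ≠ 0, Projectivization.mk ℝ w h = x

/-- Uniform hyperbolicity witnessed by unstable/stable directions `u`, `s`. -/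
def IsUHWith (P : ℤ → Matrix (Fin 2) (Fin 2) ℝ) (u s : ℤ → RP1) : Prop :=
  (∀ i : ℤ, matAct (P i) (u i) = u (i + 1) ∧ matAct (P i) (s i) = s (i + 1)) ∧
  ∃ C > 0, ∃ η > 1, ∀ i : ℤ, ∀ n : ℕ,
    (∀ w : E2, ‖w‖ = 1 → SpansLine w (u i) → ‖mulVecE (bwd P n i) w‖ ≤ C / η ^ n) ∧
    (∀ w : E2, ‖w‖ = 1 → SpansLine w (s i) → ‖mulVecE (fwd P n i) w‖ ≤ C / η ^ n)

/-- Uniform hyperbolicity of a cocycle. -/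
def IsUH (P : ℤ → Matrix (Fin 2) (Fin 2) ℝ) : Prop := ∃ u s, IsUHWith P u s

/-- Dominated splitting (DS1)–(DS4). -/
def IsDS (T : ℤ → Matrix (Fin 2) (Fin 2) ℝ) : Prop :=
  ∃ u s : ℤ → RP1,
    (∀ i : ℤ, matAct (T i) (u i) = u (i + 1) ∧ matAct (T i) (s i) = s (i + 1)) ∧
    ∃ N : ℕ, 1 ≤ N ∧
      (∃ η > 1, ∀ i : ℤ, ∀ w w' : E2, ‖w‖ = 1 → ‖w'‖ = 1 →
        SpansLine w (u i) → SpansLine w' (s i) →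
        ‖mulVecE (fwd T N i) w‖ > η * ‖mulVecE (fwd T N i) w'‖) ∧
      (∃ δ > 0, ∀ i : ℤ, projDist (u i) (s i) > δ) ∧
      (∃ c > 0, ∀ i : ℤ, c ≤ matOpNorm (fwd T N i))

/-- The quotient topology on the projective line. -/
noncomputable instance : TopologicalSpace RP1 :=
  inferInstanceAs (TopologicalSpace (Quotient (projectivizationSetoid ℝ E2)))

/-- An invariant cone for a finite family of matrices acting on `RP1`. -/
def InvariantCone {D : ℕ} (A : Fin D → Matrix (Fin 2) (Fin 2) ℝ) : Prop :=
  ∃ M : Set RP1, M.Nonempty ∧ IsOpen M ∧ closure M ≠ Set.univ ∧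
    ∀ d : Fin D, closure (matAct (A d) '' M) ⊆ M

/-- `x` is the source (stable eigenline) of `A`. -/
def IsSourceOf (A : Matrix (Fin 2) (Fin 2) ℝ) (x : RP1) : Prop :=
  ∃ (ξ : ℝ) (v : E2), |ξ| < 1 ∧ mulVecE A v = ξ • v ∧ SpansLine v x

/-- `x` is the sink (unstable eigenline) of `A`. -/
def IsSinkOf (A : Matrix (Fin 2) (Fin 2) ℝ) (x : RP1) : Prop :=
  ∃ (ξ : ℝ) (v : E2), 1 < |ξ| ∧ mulVecE A v = ξ • v ∧ SpansLine v x

/-- The source-sink condition: all sinks lie in the same connected component of the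
complement of the set of sources. -/
def SourceSinkCond {D : ℕ} (srcs snks : Fin D → RP1) : Prop :=
  ∀ d d' : Fin D, snks d' ∈ connectedComponentIn {x : RP1 | ∀ e, srcs e ≠ x} (snks d)

namespace S7
/-- cross product -/
def cx (a b : E2) : ℝ := a 0 * b 1 - a 1 * b 0
/-- unit vector at angle θ -/
def rv (θ : ℝ) : E2 := !₂[Real.cos θ, Real.sin θ]

lemma rv_zero (θ : ℝ) : rv θ 0 = Real.cos θ := rfl
lemma rv_one (θ : ℝ) : rv θ 1 = Real.sin θ := rfl

lemma cx_rv (a b : ℝ) : cx (rv a) (rv b) = Real.sin (b - a) := by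
  simp [cx, rv, Real.sin_sub]; ring

lemma rv_ne_zero (θ : ℝ) : rv θ ≠ 0 := by
  intro h
  have h0 : rv θ 0 = 0 := by rw [h]; rfl
  have h1 : rv θ 1 = 0 := by rw [h]; rfl
  have := Real.sin_sq_add_cos_sq θ
  rw [rv_zero] at h0; rw [rv_one] at h1
  rw [h0, h1] at this; norm_num at this

lemma rv_add_pi (θ : ℝ) : rv (θ + Real.pi) = (-1 : ℝ) • rv θ := by
  ext i
  fin_cases i <;>
    simp [rv, Real.cos_add_pi, Real.sin_add_pi, PiLp.smul_apply]

lemma mulVecE_apply (A : Matrix (Fin 2) (Fin 2) ℝ) (v : E2) (i : Fin 2) :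
    mulVecE A v i = A i 0 * v 0 + A i 1 * v 1 := by
  simp [mulVecE, matLin, Matrix.mulVecLin, Matrix.mulVec, dotProduct, Fin.sum_univ_two]
  fin_cases i <;> simp

lemma cx_mulVecE (A : Matrix (Fin 2) (Fin 2) ℝ) (x y : E2) :
    cx (mulVecE A x) (mulVecE A y) = A.det * cx x y := by
  simp [cx, mulVecE_apply, Matrix.det_fin_two]; ring

lemma mulVecE_smul (A : Matrix (Fin 2) (Fin 2) ℝ) (c : ℝ) (v : E2) :
    mulVecE A (c • v) = c • mulVecE A v := by
  simp [mulVecE, _root_.map_smul]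

lemma cx_smul_left (c : ℝ) (a b : E2) : cx (c • a) b = c * cx a b := by
  simp [cx, PiLp.smul_apply]; ring

lemma cx_smul_right (c : ℝ) (a b : E2) : cx a (c • b) = c * cx a b := by
  simp [cx, PiLp.smul_apply]; ring

lemma cx_swap (a b : E2) : cx a b = - cx b a := by simp [cx]; ring

/-- Cramer decomposition: `cx a b • v = cx v b • a + cx a v • b`. -/
lemma cramer (a b v : E2) : cx a b • v = cx v b • a + cx a v • b := by
  ext i
  fin_cases i <;>
    (simp [cx, PiLp.smul_apply, PiLp.add_apply]; ring)

lemma cx_self (a : E2) : cx a a = 0 := by simp [cx]; ring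

lemma cx_sub_left (a b c : E2) : cx (a - b) c = cx a c - cx b c := by
  simp [cx, PiLp.sub_apply]; ring

/-- bilinear expansion -/
lemma cx_combo (p q x y : E2) (a b c d : ℝ) (hx : x = a • p + b • q) (hy : y = c • p + d • q) :
    cx x y = (a * d - b * c) * cx p q := by
  subst hx hy
  simp [cx, PiLp.smul_apply, PiLp.add_apply]; ring

/-- if cx a v = 0 and both nonzero then parallel -/
lemma eq_smul_of_cx_eq_zero {a v : E2} (ha : a ≠ 0) (h : cx a v = 0) :
    ∃ c : ℝ, v = c • a := by
  have h' : a 0 * v 1 = a 1 * v 0 := by unfold cx at h; linarith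
  by_cases h0 : a 0 = 0
  · have h1 : a 1 ≠ 0 := by
      intro h1; apply ha; ext i; fin_cases i <;> simp [h0, h1] <;> rfl
    refine ⟨v 1 / a 1, ?_⟩
    ext i
    have : a 1 * v 0 = 0 := by rw [← h', h0]; ring
    have hv0 : v 0 = 0 := by
      rcases mul_eq_zero.1 this with h | h; exact absurd h h1; exact h
    fin_cases i <;> simp [PiLp.smul_apply, h0, hv0] <;> field_simp
  · refine ⟨v 0 / a 0, ?_⟩
    ext i
    fin_cases i <;> simp [PiLp.smul_apply] <;> field_simp <;> linarith [h']

instance : Setoid {v : E2 // v ≠ 0} := projectivizationSetoid ℝ E2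

open Projectivization in
lemma mk_smul_eq {v : E2} (hv : v ≠ 0) (c : ℝ) (hc : c ≠ 0) (h' : c • v ≠ 0) :
    Projectivization.mk ℝ (c • v) h' = Projectivization.mk ℝ v hv := by
  rw [Projectivization.mk_eq_mk_iff]
  exact ⟨Units.mk0 c hc, rfl⟩

/-- representative of mk v is a nonzero multiple of v -/
lemma rep_mk {v : E2} (hv : v ≠ 0) :
    ∃ c : ℝ, c ≠ 0 ∧ (Projectivization.mk ℝ v hv).rep = c • v := by
  obtain ⟨a, ha⟩ := Projectivization.exists_smul_eq_mk_rep ℝ v hv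
  exact ⟨a, a.ne_zero, ha.symm⟩

/-- sign transfer for a function homogeneous of degree 2 -/
lemma sign_transfer (f : E2 → ℝ) (hf2 : ∀ (c : ℝ) v, f (c • v) = c^2 * f v)
    {v : E2} (hv : v ≠ 0) {x : RP1} (hx : Projectivization.mk ℝ v hv = x) :
    (0 < f x.rep ↔ 0 < f v) ∧ (0 ≤ f x.rep ↔ 0 ≤ f v) := by
  obtain ⟨c, hc, hrep⟩ := rep_mk hv
  subst hx
  rw [hrep, hf2]
  have hc2 : 0 < c^2 := by positivity
  constructor
  · constructor <;> intro h <;> nlinarith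
  · constructor <;> intro h <;> nlinarith

lemma injective_matLin {A : Matrix (Fin 2) (Fin 2) ℝ} (hA : A.det = 1) :
    Function.Injective (matLin A) := by
  have hunit : IsUnit A.det := by rw [hA]; exact isUnit_one
  have hcomp : ∀ (B C : Matrix (Fin 2) (Fin 2) ℝ) (v : E2),
      matLin B (matLin C v) = matLin (B * C) v := by
    intro B C v
    simp [matLin, Matrix.mulVecLin_mul]
  have hone : ∀ v : E2, matLin 1 v = v := by
    intro v
    simp [matLin]
  have hli : Function.LeftInverse (matLin A⁻¹) (matLin A) := by
    intro x
    rw [hcomp, Matrix.nonsing_inv_mul A hunit, hone]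
  exact hli.injective

lemma matAct_mk {A : Matrix (Fin 2) (Fin 2) ℝ} (hA : A.det = 1) {v : E2} (hv : v ≠ 0)
    (hv' : mulVecE A v ≠ 0) :
    matAct A (Projectivization.mk ℝ v hv) = Projectivization.mk ℝ (mulVecE A v) hv' := by
  rw [matAct, dif_pos (injective_matLin hA), Projectivization.map_mk]
  rfl

lemma mulVecE_ne_zero {A : Matrix (Fin 2) (Fin 2) ℝ} (hA : A.det = 1) {v : E2} (hv : v ≠ 0) :
    mulVecE A v ≠ 0 := by
  intro h
  apply hv
  have := injective_matLin hA (a₁ := v) (a₂ := 0)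
  simp only [map_zero] at this
  exact this h

/-- openness of positivity set of a degree-2 homogeneous function -/
lemma isOpen_pos_set (f : E2 → ℝ) (hf : Continuous f)
    (hf2 : ∀ (c : ℝ) v, f (c • v) = c^2 * f v) :
    IsOpen {x : RP1 | 0 < f x.rep} := by
  refine (isQuotientMap_quotient_mk' (s := projectivizationSetoid ℝ E2)).isOpen_preimage.1 ?_
  have hpre : (Quotient.mk' ⁻¹' {x : RP1 | 0 < f x.rep} : Set {v : E2 // v ≠ 0})
      = {v : {v : E2 // v ≠ 0} | 0 < f v.1} := by
    ext v
    simp only [Set.mem_preimage, Set.mem_setOf_eq]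
    exact (sign_transfer f hf2 v.2 (rfl : Projectivization.mk ℝ v.1 v.2 = Quotient.mk' v)).1
  exact (congrArg IsOpen hpre).mpr (isOpen_Ioi.preimage (hf.comp continuous_subtype_val))

lemma isClosed_nonneg_set (f : E2 → ℝ) (hf : Continuous f)
    (hf2 : ∀ (c : ℝ) v, f (c • v) = c^2 * f v) :
    IsClosed {x : RP1 | 0 ≤ f x.rep} := by
  have : {x : RP1 | 0 ≤ f x.rep} = {x : RP1 | 0 < -f x.rep}ᶜ := by
    ext x; simp only [Set.mem_setOf_eq, Set.mem_compl_iff, not_lt]; constructor <;> intro h <;> linarith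
  rw [this]
  exact (isOpen_pos_set (fun v => -f v) hf.neg
    (fun c v => by show -f (c • v) = c ^ 2 * -f v; rw [hf2]; ring)).isClosed_compl

lemma continuous_cx_prod (a b : E2) : Continuous (fun v : E2 => cx a v * cx v b) := by
  have h0 : Continuous (fun v : E2 => v 0) :=
    (continuous_apply 0).comp (PiLp.continuous_ofLp 2 (fun _ : Fin 2 => ℝ))
  have h1 : Continuous (fun v : E2 => v 1) :=
    (continuous_apply 1).comp (PiLp.continuous_ofLp 2 (fun _ : Fin 2 => ℝ))
  unfold cx; fun_prop

lemma cx_prod_homog (a b : E2) (c : ℝ) (v : E2) :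
    cx a (c • v) * cx (c • v) b = c^2 * (cx a v * cx v b) := by
  rw [cx_smul_right, cx_smul_left]; ring

end S7

namespace S7

/-- every nonzero vector has an angle representative in any half-open interval of length π -/
lemma exists_angle {u : E2} (hu : u ≠ 0) (γ : ℝ) :
    ∃ θ ∈ Set.Ioc γ (γ + Real.pi), ∃ c : ℝ, c ≠ 0 ∧ u = c • rv θ := by
  set z : ℂ := Complex.mk (u 0) (u 1) with hz
  have hz0 : z ≠ 0 := by
    intro h
    apply hu
    have h0 : u 0 = 0 := congrArg Complex.re h
    have h1 : u 1 = 0 := congrArg Complex.im h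
    ext i; fin_cases i <;> simpa
  have habs : ‖z‖ ≠ 0 := by simpa using hz0
  have hcos : Real.cos z.arg = u 0 / ‖z‖ := Complex.cos_arg hz0
  have hsin : Real.sin z.arg = u 1 / ‖z‖ := Complex.sin_arg z
  set ψ := z.arg
  have hu' : u = (‖z‖ : ℝ) • rv ψ := by
    ext i
    fin_cases i <;> simp [rv, PiLp.smul_apply, hcos, hsin] <;> field_simp
  set k : ℤ := ⌊(γ - ψ) / Real.pi⌋ + 1 with hk
  have hπ := Real.pi_pos
  have hfl1 : ((k : ℝ) - 1) * Real.pi ≤ γ - ψ := by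
    have h := Int.floor_le ((γ - ψ) / Real.pi)
    have : ((k : ℝ) - 1) ≤ (γ - ψ) / Real.pi := by push_cast [hk]; linarith
    calc ((k : ℝ) - 1) * Real.pi ≤ ((γ - ψ) / Real.pi) * Real.pi :=
          mul_le_mul_of_nonneg_right this hπ.le
      _ = γ - ψ := by field_simp
  have hfl2 : γ - ψ < (k : ℝ) * Real.pi := by
    have h := Int.lt_floor_add_one ((γ - ψ) / Real.pi)
    have h' : (γ - ψ) / Real.pi < (k : ℝ) := by push_cast [hk]; linarith
    calc γ - ψ = ((γ - ψ) / Real.pi) * Real.pi := by field_simp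
      _ < (k : ℝ) * Real.pi := mul_lt_mul_of_pos_right h' hπ
  have hrvθ : rv (ψ + k * Real.pi) = ((-1 : ℝ) ^ k) • rv ψ := by
    ext i
    fin_cases i <;>
      simp [rv, PiLp.smul_apply, Real.cos_add_int_mul_pi, Real.sin_add_int_mul_pi]
  refine ⟨ψ + k * Real.pi, ⟨by linarith, by linarith⟩,
    ‖z‖ * ((-1 : ℝ) ^ k)⁻¹, ?_, ?_⟩
  · exact mul_ne_zero habs (inv_ne_zero (zpow_ne_zero _ (by norm_num)))
  · rw [hrvθ, smul_smul, hu']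
    congr 1
    have h0 : ((-1 : ℝ) ^ k) ≠ 0 := zpow_ne_zero _ (by norm_num)
    field_simp

/-- two angle reps of the same projective point in a common half-open length-π window are equal;
more useful general form: parallel rv's have angle difference a multiple of π -/
lemma rv_parallel_angles {θ φ : ℝ} (h : Projectivization.mk ℝ (rv θ) (rv_ne_zero θ)
    = Projectivization.mk ℝ (rv φ) (rv_ne_zero φ)) : ∃ n : ℤ, (n : ℝ) * Real.pi = θ - φ := by
  rw [Projectivization.mk_eq_mk_iff] at h
  obtain ⟨a, ha⟩ := h
  rw [Units.smul_def] at ha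
  have : cx (rv θ) (rv φ) = 0 := by
    rw [← ha, cx_smul_left (a : ℝ) (rv φ) (rv φ), cx_self]; ring
  rw [cx_rv] at this
  rw [Real.sin_eq_zero_iff] at this
  obtain ⟨n, hn⟩ := this
  exact ⟨-n, by push_cast; linarith⟩
end S7

namespace S7

lemma norm_rv (θ : ℝ) : ‖rv θ‖ = 1 := by
  have : ‖rv θ‖ = Real.sqrt (‖rv θ 0‖^2 + ‖rv θ 1‖^2) := by
    rw [EuclideanSpace.norm_eq]
    congr 1
    rw [Fin.sum_univ_two]
  rw [this, rv_zero, rv_one]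
  rw [Real.norm_eq_abs, Real.norm_eq_abs, sq_abs, sq_abs]
  rw [show Real.cos θ ^ 2 + Real.sin θ ^ 2 = 1 from by
    rw [add_comm]; exact Real.sin_sq_add_cos_sq θ]
  exact Real.sqrt_one

/-- the separating function -/
def gfun (φ σ : ℝ) : RP1 → ℝ :=
  Quotient.lift (fun v : {v : E2 // v ≠ 0} => cx (rv φ) v.1 * cx v.1 (rv σ) / ‖v.1‖^2)
    (by
      rintro a b ⟨u, hu⟩
      have ha : a.1 = (u : ℝ) • b.1 := by
        rw [← hu]; rfl
      simp only [ha]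
      rw [cx_smul_right, cx_smul_left, norm_smul]
      have hb : ‖b.1‖ ≠ 0 := norm_ne_zero_iff.2 b.2
      have hu0 : (u : ℝ) ≠ 0 := u.ne_zero
      rw [mul_pow]
      field_simp
      rw [Real.norm_eq_abs, sq_abs]; ring)

lemma gfun_mk (φ σ : ℝ) {v : E2} (hv : v ≠ 0) :
    gfun φ σ (Projectivization.mk ℝ v hv) = cx (rv φ) v * cx v (rv σ) / ‖v‖^2 := rfl

lemma continuous_gfun (φ σ : ℝ) : Continuous (gfun φ σ) := by
  apply Continuous.quotient_lift
  have h0 : Continuous (fun v : E2 => v 0) :=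
    (continuous_apply 0).comp (PiLp.continuous_ofLp 2 (fun _ : Fin 2 => ℝ))
  have h1 : Continuous (fun v : E2 => v 1) :=
    (continuous_apply 1).comp (PiLp.continuous_ofLp 2 (fun _ : Fin 2 => ℝ))
  have hnum : Continuous (fun v : {v : E2 // v ≠ 0} => cx (rv φ) v.1 * cx v.1 (rv σ)) :=
    (continuous_cx_prod (rv φ) (rv σ)).comp continuous_subtype_val
  have hden : Continuous (fun v : {v : E2 // v ≠ 0} => ‖v.1‖^2) := by fun_prop
  exact hnum.div hden (fun v => pow_ne_zero _ (norm_ne_zero_iff.2 v.2))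

lemma gfun_rv (φ σ θ : ℝ) :
    gfun φ σ (Projectivization.mk ℝ (rv θ) (rv_ne_zero θ))
      = Real.sin (θ - φ) * Real.sin (σ - θ) := by
  rw [gfun_mk, cx_rv, cx_rv, norm_rv]
  norm_num

/-- Separation: no source angle strictly between two angles of points of a connected
subset of the complement of the sources, all within a chart window. -/
lemma separation {D : ℕ} (srcs : Fin D → RP1) (Cpt : RP1)
    {σ φ θ1 θ2 : ℝ}
    (hσsrc : ∃ e, srcs e = Projectivization.mk ℝ (rv σ) (rv_ne_zero σ))
    (hφsrc : ∃ e, srcs e = Projectivization.mk ℝ (rv φ) (rv_ne_zero φ))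
    (h1 : σ < θ1) (h12 : θ1 < φ) (h2 : φ < θ2) (h2' : θ2 < σ + Real.pi)
    (hm1 : Projectivization.mk ℝ (rv θ1) (rv_ne_zero θ1)
      ∈ connectedComponentIn {x : RP1 | ∀ e, srcs e ≠ x} Cpt)
    (hm2 : Projectivization.mk ℝ (rv θ2) (rv_ne_zero θ2)
      ∈ connectedComponentIn {x : RP1 | ∀ e, srcs e ≠ x} Cpt) : False := by
  set S : Set RP1 := {x : RP1 | ∀ e, srcs e ≠ x} with hS
  set C := connectedComponentIn S Cpt with hC
  have hCS : C ⊆ S := connectedComponentIn_subset S Cpt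
  have hpc : IsPreconnected C := isPreconnected_connectedComponentIn
  have him : IsPreconnected ((gfun φ σ) '' C) :=
    hpc.image _ ((continuous_gfun φ σ).continuousOn)
  have hg1 : 0 < gfun φ σ (Projectivization.mk ℝ (rv θ1) (rv_ne_zero θ1)) := by
    rw [gfun_rv]
    have hs1 : Real.sin (θ1 - φ) < 0 := by
      apply Real.sin_neg_of_neg_of_neg_pi_lt <;> [linarith; nlinarith [Real.pi_pos]]
    have hs2 : Real.sin (σ - θ1) < 0 := by
      apply Real.sin_neg_of_neg_of_neg_pi_lt <;> [linarith; nlinarith [Real.pi_pos]]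
    nlinarith
  have hg2 : gfun φ σ (Projectivization.mk ℝ (rv θ2) (rv_ne_zero θ2)) < 0 := by
    rw [gfun_rv]
    have hs1 : 0 < Real.sin (θ2 - φ) := by
      apply Real.sin_pos_of_pos_of_lt_pi <;> linarith
    have hs2 : Real.sin (σ - θ2) < 0 := by
      apply Real.sin_neg_of_neg_of_neg_pi_lt <;> linarith
    nlinarith
  have h0mem : (0 : ℝ) ∈ (gfun φ σ) '' C := by
    apply him.Icc_subset (Set.mem_image_of_mem _ hm2) (Set.mem_image_of_mem _ hm1)
    exact ⟨hg2.le, hg1.le⟩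
  obtain ⟨x, hxC, hgx⟩ := h0mem
  -- x has gfun zero, so x is one of the two source lines
  have hxmk := Projectivization.mk_rep x
  rw [← hxmk, gfun_mk] at hgx
  have hnorm : (0:ℝ) < ‖x.rep‖^2 :=
    pow_pos (norm_pos_iff.2 (Projectivization.rep_nonzero x)) 2
  have hzero : cx (rv φ) x.rep = 0 ∨ cx x.rep (rv σ) = 0 := by
    rcases mul_eq_zero.1 (by rw [div_eq_zero_iff] at hgx; exact hgx.resolve_right hnorm.ne' :
        cx (rv φ) x.rep * cx x.rep (rv σ) = 0) with h | h
    · exact Or.inl h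
    · exact Or.inr h
  have key : ∀ (ψ : ℝ), cx (rv ψ) x.rep = 0 →
      x = Projectivization.mk ℝ (rv ψ) (rv_ne_zero ψ) := by
    intro ψ hψ
    obtain ⟨c, hc⟩ := eq_smul_of_cx_eq_zero (rv_ne_zero ψ) hψ
    have hc0 : c ≠ 0 := fun h0 => Projectivization.rep_nonzero x (by rw [hc, h0, zero_smul])
    rw [← hxmk, Projectivization.mk_eq_mk_iff]
    exact ⟨Units.mk0 c hc0, by rw [Units.smul_def]; exact hc.symm⟩
  have hxsrc : ∃ e, srcs e = x := by
    rcases hzero with h | h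
    · obtain ⟨e, he⟩ := hφsrc
      exact ⟨e, by rw [he, ← key φ h]⟩
    · obtain ⟨e, he⟩ := hσsrc
      refine ⟨e, ?_⟩
      have h' : cx (rv σ) x.rep = 0 := by rw [cx_swap] at h; linarith
      rw [he, ← key σ h']
  obtain ⟨e, he⟩ := hxsrc
  exact (hCS hxC) e he

end S7

namespace S7

lemma cx_add_right (a x y : E2) : cx a (x + y) = cx a x + cx a y := by
  simp [cx, PiLp.add_apply]; ring

lemma cx_add_left (a x y : E2) : cx (x + y) a = cx x a + cx y a := by
  simp [cx, PiLp.add_apply]; ring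

lemma mulVecE_add (B : Matrix (Fin 2) (Fin 2) ℝ) (x y : E2) :
    mulVecE B (x + y) = mulVecE B x + mulVecE B y := by
  simp [mulVecE, map_add]

/-- transfer an eigenvector to an angle representative -/
lemma eig_of_spans {B : Matrix (Fin 2) (Fin 2) ℝ} {ξ : ℝ} {v : E2} (hv : v ≠ 0)
    (h : mulVecE B v = ξ • v) (γ : ℝ) :
    ∃ θ ∈ Set.Ioc γ (γ + Real.pi), mulVecE B (rv θ) = ξ • rv θ ∧
      Projectivization.mk ℝ v hv = Projectivization.mk ℝ (rv θ) (rv_ne_zero θ) := by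
  obtain ⟨θ, hθ, c, hc, hvc⟩ := exists_angle hv γ
  refine ⟨θ, hθ, ?_, ?_⟩
  · have h1 : mulVecE B (c • rv θ) = ξ • (c • rv θ) := by rw [← hvc]; exact h
    rw [mulVecE_smul] at h1
    have h2 : c • mulVecE B (rv θ) = c • (ξ • rv θ) := by
      rw [h1, smul_comm]
    exact smul_right_injective E2 hc h2
  · have : v = c • rv θ := hvc
    rw [show Projectivization.mk ℝ v hv
        = Projectivization.mk ℝ (c • rv θ) (this ▸ hv) from by congr 1]
    exact mk_smul_eq (rv_ne_zero θ) c hc _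

/-- eigenvalues of an SL2 matrix multiply to 1, and eigenlines with distinct
eigenvalue magnitudes are transverse -/
lemma eigen_product {B : Matrix (Fin 2) (Fin 2) ℝ} (hdet : B.det = 1) {t u θs θu : ℝ}
    (hs : mulVecE B (rv θs) = t • rv θs) (hw : mulVecE B (rv θu) = u • rv θu)
    (ht : |t| < 1) (hu : 1 < |u|) : t * u = 1 ∧ cx (rv θs) (rv θu) ≠ 0 := by
  have hΔ : cx (rv θs) (rv θu) ≠ 0 := by
    intro h0
    obtain ⟨c, hc⟩ := eq_smul_of_cx_eq_zero (rv_ne_zero θs) h0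
    have hc0 : c ≠ 0 := by
      intro h; apply rv_ne_zero θu; rw [hc, h, zero_smul]
    have h1 : mulVecE B (rv θu) = (c * t) • rv θs := by
      rw [hc, mulVecE_smul, hs, smul_smul]
    have h2 : (u * c) • rv θs = (c * t) • rv θs := by
      rw [← smul_smul, ← hc, ← hw, h1]
    have h3 : u * c = c * t := by
      have := sub_eq_zero.2 h2
      rw [← sub_smul] at this
      rcases smul_eq_zero.1 this with h | h
      · exact sub_eq_zero.1 h
      · exact absurd h (rv_ne_zero θs)
    have : u = t := by
      have h4 : u * c = t * c := by rw [h3]; ring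
      exact mul_right_cancel₀ hc0 h4
    rw [this] at hu; linarith [lt_trans hu ht]
  constructor
  · have h1 : cx (mulVecE B (rv θs)) (mulVecE B (rv θu)) = B.det * cx (rv θs) (rv θu) :=
      cx_mulVecE B _ _
    rw [hs, hw, cx_smul_left, cx_smul_right, hdet, one_mul] at h1
    have h2 : (t * u - 1) * cx (rv θs) (rv θu) = 0 := by linear_combination h1
    rcases mul_eq_zero.1 h2 with h | h
    · linarith
    · exact absurd h hΔ
  · exact hΔ

end S7

namespace S7

lemma sign_helper {t u : ℝ} (ht : |t| < 1) (htu : t * u = 1) :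
    (0 < t ∧ 0 < u ∧ 0 < u - t) ∨ (t < 0 ∧ u < 0 ∧ u - t < 0) := by
  have habs := abs_lt.1 ht
  have ht0 : t ≠ 0 := by intro h; rw [h] at htu; simp at htu
  rcases lt_trichotomy t 0 with h | h | h
  · right
    have hu : u < 0 := by nlinarith
    exact ⟨h, hu, by nlinarith⟩
  · exact absurd h ht0
  · left
    have hu : 0 < u := by nlinarith
    exact ⟨h, hu, by nlinarith⟩

lemma brackets_pos {t u S1 S2 S3 S4 : ℝ} (ht : |t| < 1) (htu : t * u = 1)
    (hS1 : 0 < S1) (hS2 : S2 < 0) (hS3 : S3 < 0) (hS4 : S4 < 0) :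
    0 < S1*S2*(u - t) * (t*S1*S4 - u*S2*S3) ∧
    0 < (u*S1*S4 - t*S2*S3) * (S3*S4*(t - u)) ∧
    0 < S1*S2*(u - t) * (S3*S4*(t - u)) + (u*S1*S4 - t*S2*S3) * (t*S1*S4 - u*S2*S3) := by
  have m2 : 0 < -S2 := neg_pos.2 hS2
  have m3 : 0 < -S3 := neg_pos.2 hS3
  have m4 : 0 < -S4 := neg_pos.2 hS4
  have hA0 : 0 < -(S1*S2) := by linarith [mul_pos hS1 m2]
  have hS34 : 0 < S3*S4 := by linarith [mul_pos m3 m4]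
  -- first term of goal 3 is always nonnegative
  have ht1 : 0 ≤ S1*S2*(u - t) * (S3*S4*(t - u)) := by
    linarith [mul_nonneg (mul_pos hA0 hS34).le (sq_nonneg (u - t))]
  rcases sign_helper ht htu with ⟨h1, h2, h3⟩ | ⟨h1, h2, h3⟩
  · -- positive eigenvalues
    have p1 : 0 < t*S1*(-S4) := mul_pos (mul_pos h1 hS1) m4
    have p2 : 0 < u*(-S2)*(-S3) := mul_pos (mul_pos h2 m2) m3
    have hB : 0 < -(t*S1*S4 - u*S2*S3) := by linarith [p1, p2]
    have hA : 0 < (-(S1*S2))*(u - t) := mul_pos hA0 h3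
    have q1 : 0 < u*S1*(-S4) := mul_pos (mul_pos h2 hS1) m4
    have q2 : 0 < t*(-S2)*(-S3) := mul_pos (mul_pos h1 m2) m3
    have hF : 0 < -(u*S1*S4 - t*S2*S3) := by linarith [q1, q2]
    have hSec : 0 < -(S3*S4*(t - u)) := by linarith [mul_pos hS34 h3]
    refine ⟨?_, ?_, ?_⟩
    · linarith [mul_pos hA hB]
    · linarith [mul_pos hF hSec]
    · linarith [ht1, mul_pos hF hB]
  · -- negative eigenvalues
    have n1 : 0 < -t := neg_pos.2 h1
    have n2 : 0 < -u := neg_pos.2 h2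
    have n3 : 0 < t - u := by linarith
    have p1 : 0 < (-t)*S1*(-S4) := mul_pos (mul_pos n1 hS1) m4
    have p2 : 0 < (-u)*(-S2)*(-S3) := mul_pos (mul_pos n2 m2) m3
    have hB : 0 < t*S1*S4 - u*S2*S3 := by linarith [p1, p2]
    have hA : 0 < S1*S2*(u - t) := by linarith [mul_pos hA0 n3]
    have q1 : 0 < (-u)*S1*(-S4) := mul_pos (mul_pos n2 hS1) m4
    have q2 : 0 < (-t)*(-S2)*(-S3) := mul_pos (mul_pos n1 m2) m3
    have hF : 0 < u*S1*S4 - t*S2*S3 := by linarith [q1, q2]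
    have hSec : 0 < S3*S4*(t - u) := mul_pos hS34 n3
    refine ⟨?_, ?_, ?_⟩
    · linarith [mul_pos hA hB]
    · linarith [mul_pos hF hSec]
    · linarith [ht1, mul_pos hF hB]

set_option maxHeartbeats 1600000 in
/-- The key sign computation. -/
lemma key_signs {B : Matrix (Fin 2) (Fin 2) ℝ} {t u θs θu α β δ : ℝ}
    (hs : mulVecE B (rv θs) = t • rv θs) (hw : mulVecE B (rv θu) = u • rv θu)
    (ht : |t| < 1) (htu : t * u = 1)
    (hβα : β - α ≤ Real.pi) (hδ : 0 < δ) (h2δ : 2*δ < β - α)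
    (hθu1 : α + δ < θu) (hθu2 : θu < β - δ)
    (hθs1 : β ≤ θs) (hθs2 : θs ≤ α + Real.pi) :
    0 < cx (rv (α+δ)) (mulVecE B (rv (α+δ))) * cx (mulVecE B (rv (α+δ))) (rv (β-δ)) ∧
    0 < cx (rv (α+δ)) (mulVecE B (rv (β-δ))) * cx (mulVecE B (rv (β-δ))) (rv (β-δ)) ∧
    0 < cx (rv (α+δ)) (mulVecE B (rv (α+δ))) * cx (mulVecE B (rv (β-δ))) (rv (β-δ))
      + cx (rv (α+δ)) (mulVecE B (rv (β-δ))) * cx (mulVecE B (rv (α+δ))) (rv (β-δ)) := by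
  have hπ := Real.pi_pos
  set P := rv (α+δ) with hP
  set Q := rv (β-δ) with hQ
  set V := rv θs with hV
  set W := rv θu with hW
  set Δ := cx V W with hΔdef
  set S1 := cx P W with hS1def
  set S2 := cx V P with hS2def
  set S3 := cx Q W with hS3def
  set S4 := cx V Q with hS4def
  -- sign facts
  have hΔ : Δ < 0 := by
    rw [hΔdef, hV, hW, cx_rv]
    apply Real.sin_neg_of_neg_of_neg_pi_lt <;> linarith
  have hS1 : 0 < S1 := by
    rw [hS1def, hP, hW, cx_rv]
    apply Real.sin_pos_of_pos_of_lt_pi <;> linarith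
  have hS2 : S2 < 0 := by
    rw [hS2def, hV, hP, cx_rv]
    apply Real.sin_neg_of_neg_of_neg_pi_lt <;> linarith
  have hS3 : S3 < 0 := by
    rw [hS3def, hQ, hW, cx_rv]
    apply Real.sin_neg_of_neg_of_neg_pi_lt <;> linarith
  have hS4 : S4 < 0 := by
    rw [hS4def, hV, hQ, cx_rv]
    apply Real.sin_neg_of_neg_of_neg_pi_lt <;> linarith
  -- Cramer decompositions
  have hPd : Δ • P = S1 • V + S2 • W := cramer V W P
  have hQd : Δ • Q = S3 • V + S4 • W := cramer V W Q
  have hBP : Δ • mulVecE B P = (t*S1) • V + (u*S2) • W := by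
    have h1 : mulVecE B (Δ • P) = Δ • mulVecE B P := mulVecE_smul B Δ P
    rw [← h1, hPd, mulVecE_add, mulVecE_smul, mulVecE_smul, hs, hw]
    module
  have hBQ : Δ • mulVecE B Q = (t*S3) • V + (u*S4) • W := by
    have h1 : mulVecE B (Δ • Q) = Δ • mulVecE B Q := mulVecE_smul B Δ Q
    rw [← h1, hQd, mulVecE_add, mulVecE_smul, mulVecE_smul, hs, hw]
    module
  -- scalar identities
  have e1 : Δ^2 * cx P (mulVecE B P) = S1*S2*(u - t) * Δ := by
    have := cx_combo V W (Δ • P) (Δ • mulVecE B P) S1 S2 (t*S1) (u*S2) hPd hBP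
    rw [cx_smul_left, cx_smul_right] at this
    rw [show Δ^2 * cx P (mulVecE B P) = Δ * (Δ * cx P (mulVecE B P)) from by ring, this]
    try ring
  have e2 : Δ^2 * cx (mulVecE B P) Q = (t*S1*S4 - u*S2*S3) * Δ := by
    have := cx_combo V W (Δ • mulVecE B P) (Δ • Q) (t*S1) (u*S2) S3 S4 hBP hQd
    rw [cx_smul_left, cx_smul_right] at this
    rw [show Δ^2 * cx (mulVecE B P) Q = Δ * (Δ * cx (mulVecE B P) Q) from by ring, this]
    try ring
  have e3 : Δ^2 * cx P (mulVecE B Q) = (u*S1*S4 - t*S2*S3) * Δ := by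
    have := cx_combo V W (Δ • P) (Δ • mulVecE B Q) S1 S2 (t*S3) (u*S4) hPd hBQ
    rw [cx_smul_left, cx_smul_right] at this
    rw [show Δ^2 * cx P (mulVecE B Q) = Δ * (Δ * cx P (mulVecE B Q)) from by ring, this]
    try ring
  have e4 : Δ^2 * cx (mulVecE B Q) Q = S3*S4*(t - u) * Δ := by
    have := cx_combo V W (Δ • mulVecE B Q) (Δ • Q) (t*S3) (u*S4) S3 S4 hBQ hQd
    rw [cx_smul_left, cx_smul_right] at this
    rw [show Δ^2 * cx (mulVecE B Q) Q = Δ * (Δ * cx (mulVecE B Q) Q) from by ring, this]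
    try ring
  -- eigenvalue sign analysis
  clear hPd hQd hBP hBQ hs hw
  have hΔ2 : 0 < Δ^2 := by rw [sq]; exact mul_pos_of_neg_of_neg hΔ hΔ
  have hΔ4 : 0 < Δ^4 := by
    rw [show (4:ℕ) = 2+2 from rfl, pow_add]; exact mul_pos hΔ2 hΔ2
  obtain ⟨hbr1, hbr2, hbr3⟩ := brackets_pos ht htu hS1 hS2 hS3 hS4
  have f1 : 0 < (Δ^2 * cx P (mulVecE B P)) * (Δ^2 * cx (mulVecE B P) Q) := by
    rw [e1, e2]; linarith [mul_pos hbr1 hΔ2]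
  have f2 : 0 < (Δ^2 * cx P (mulVecE B Q)) * (Δ^2 * cx (mulVecE B Q) Q) := by
    rw [e3, e4]; linarith [mul_pos hbr2 hΔ2]
  have f3 : 0 < (Δ^2 * cx P (mulVecE B P)) * (Δ^2 * cx (mulVecE B Q) Q)
      + (Δ^2 * cx P (mulVecE B Q)) * (Δ^2 * cx (mulVecE B P) Q) := by
    rw [e1, e2, e3, e4]; linarith [mul_pos hbr3 hΔ2]
  refine ⟨?_, ?_, ?_⟩
  · nlinarith [f1, hΔ4]
  · nlinarith [f2, hΔ4]
  · nlinarith [f3, hΔ4]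
end S7

namespace S7

/-- If `[BP],[BQ]` sit inside the open interval `I(P,Q)` coherently (T1,T2,T3 > 0),
then the closed interval `Ī(BP,BQ)` is contained in the open one. -/
lemma cone_inclusion {P Q BP BQ v : E2} (hv : v ≠ 0) (hD : cx BP BQ ≠ 0)
    (T1 : 0 < cx P BP * cx BP Q) (T2 : 0 < cx P BQ * cx BQ Q)
    (T3 : 0 < cx P BP * cx BQ Q + cx P BQ * cx BP Q)
    (h : 0 ≤ cx BP v * cx v BQ) : 0 < cx P v * cx v Q := by
  set a := cx v BQ with ha
  set b := cx BP v with hb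
  have hdecomp : cx BP BQ • v = a • BP + b • BQ := cramer BP BQ v
  have hab : ¬ (a = 0 ∧ b = 0) := by
    rintro ⟨h1, h2⟩
    rw [h1, h2, zero_smul, zero_smul, add_zero] at hdecomp
    rcases smul_eq_zero.1 hdecomp with h' | h'
    · exact hD h'
    · exact hv h'
  have e1 : cx BP BQ * cx P v = a * cx P BP + b * cx P BQ := by
    have := congrArg (fun w => cx P w) hdecomp
    simpa [cx_smul_right, cx_add_right] using this
  have e2 : cx BP BQ * cx v Q = a * cx BP Q + b * cx BQ Q := by
    have := congrArg (fun w => cx w Q) hdecomp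
    simpa [cx_smul_left, cx_add_left] using this
  have key : 0 < (cx BP BQ * cx P v) * (cx BP BQ * cx v Q) := by
    rw [e1, e2]
    have expand : (a * cx P BP + b * cx P BQ) * (a * cx BP Q + b * cx BQ Q)
        = a^2 * (cx P BP * cx BP Q) + b^2 * (cx P BQ * cx BQ Q)
          + (a*b) * (cx P BP * cx BQ Q + cx P BQ * cx BP Q) := by ring
    rw [expand]
    have hba : 0 ≤ a * b := by rw [mul_comm]; exact h
    rcases (not_and_or.1 hab) with h' | h'
    · have ha2 : 0 < a^2 := by positivity
      have : 0 ≤ b^2 * (cx P BQ * cx BQ Q) := by positivity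
      nlinarith [mul_pos ha2 T1, mul_nonneg hba T3.le]
    · have hb2 : 0 < b^2 := by positivity
      have : 0 ≤ a^2 * (cx P BP * cx BP Q) := by positivity
      nlinarith [mul_pos hb2 T2, mul_nonneg hba T3.le]
  nlinarith [key, sq_nonneg (cx BP BQ), mul_self_pos.2 hD]

end S7

open S7

set_option maxHeartbeats 1600000 in
theorem stmt_7 (D : ℕ) (hD : 1 ≤ D) (A : Fin D → Matrix.SpecialLinearGroup (Fin 2) ℝ)
    (hhyp : ∀ d : Fin D, |Matrix.trace (A d : Matrix (Fin 2) (Fin 2) ℝ)| > 2)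
    (srcs snks : Fin D → RP1)
    (hsrc : ∀ d : Fin D, IsSourceOf (A d : Matrix (Fin 2) (Fin 2) ℝ) (srcs d))
    (hsnk : ∀ d : Fin D, IsSinkOf (A d : Matrix (Fin 2) (Fin 2) ℝ) (snks d))
    (hss : SourceSinkCond srcs snks) :
    InvariantCone (fun d => (A d : Matrix (Fin 2) (Fin 2) ℝ)) := by
  classical
  have hπ := Real.pi_pos
  set d0 : Fin D := ⟨0, hD⟩ with hd0
  have hdet : ∀ d, (A d : Matrix (Fin 2) (Fin 2) ℝ).det = 1 :=
    fun d => Matrix.SpecialLinearGroup.det_coe (A d)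
  have hsnkS : ∀ d, ∀ e, srcs e ≠ snks d := by
    intro d
    exact connectedComponentIn_subset {x : RP1 | ∀ e, srcs e ≠ x} (snks d0) (hss d0 d)
  -- chart base angle σ from the source of d0
  obtain ⟨ξ0, v0, hξ0, hv0eq, hv0ne, hv0mk⟩ := hsrc d0
  obtain ⟨σ, hσmem, hσeig, hσmk'⟩ := eig_of_spans hv0ne hv0eq 0
  have hσmk : srcs d0 = Projectivization.mk ℝ (rv σ) (rv_ne_zero σ) := by
    rw [← hv0mk, hσmk']
  -- sink angles
  have hsnkAng : ∀ d, ∃ (θ : ℝ) (ξ : ℝ), σ < θ ∧ θ < σ + Real.pi ∧ 1 < |ξ| ∧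
      mulVecE (A d : Matrix (Fin 2) (Fin 2) ℝ) (rv θ) = ξ • rv θ ∧
      Projectivization.mk ℝ (rv θ) (rv_ne_zero θ) = snks d := by
    intro d
    obtain ⟨ξ, v, hξ, hveq, hvne, hvmk⟩ := hsnk d
    obtain ⟨θ, hθmem, heig, hmk⟩ := eig_of_spans hvne hveq σ
    have hmks : Projectivization.mk ℝ (rv θ) (rv_ne_zero θ) = snks d := by
      rw [← hmk, hvmk]
    refine ⟨θ, ξ, hθmem.1, ?_, hξ, heig, hmks⟩
    rcases lt_or_eq_of_le hθmem.2 with h | h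
    · exact h
    · exfalso
      apply hsnkS d d0
      rw [hσmk, ← hmks, h]
      rw [show Projectivization.mk ℝ (rv (σ + Real.pi)) (rv_ne_zero _)
          = Projectivization.mk ℝ ((-1 : ℝ) • rv σ) (by
            rw [← rv_add_pi]; exact rv_ne_zero _) from by congr 1; exact rv_add_pi σ]
      exact (mk_smul_eq (rv_ne_zero σ) (-1) (by norm_num) _).symm
  choose θu ξu hθu1 hθu2 hξu hueig humk using hsnkAng
  -- source representative angles in the chart
  have hsrcAng : ∀ e, ∃ φ, σ < φ ∧ φ ≤ σ + Real.pi ∧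
      Projectivization.mk ℝ (rv φ) (rv_ne_zero φ) = srcs e := by
    intro e
    obtain ⟨ξ, v, hξ, hveq, hvne, hvmk⟩ := hsrc e
    obtain ⟨φ, hmem, _, hmk⟩ := eig_of_spans hvne hveq σ
    exact ⟨φ, hmem.1, hmem.2, by rw [← hmk, hvmk]⟩
  choose θσ hθσ1 hθσ2 hθσmk using hsrcAng
  -- the finite set of candidate boundary angles
  set T : Finset ℝ := insert σ (insert (σ + Real.pi) (Finset.image θσ Finset.univ)) with hT
  set Tα : Finset ℝ := T.filter (fun φ => ∀ d, φ < θu d) with hTα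
  set Tβ : Finset ℝ := T.filter (fun φ => ∀ d, θu d < φ) with hTβ
  have hσTα : σ ∈ Tα := by
    rw [hTα, Finset.mem_filter]
    exact ⟨Finset.mem_insert_self _ _, fun d => hθu1 d⟩
  have hπTβ : σ + Real.pi ∈ Tβ := by
    rw [hTβ, Finset.mem_filter]
    exact ⟨Finset.mem_insert_of_mem (Finset.mem_insert_self _ _), fun d => hθu2 d⟩
  set α := Tα.max' ⟨σ, hσTα⟩ with hα
  set β := Tβ.min' ⟨σ + Real.pi, hπTβ⟩ with hβ
  have hαmem := Tα.max'_mem ⟨σ, hσTα⟩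
  have hβmem := Tβ.min'_mem ⟨σ + Real.pi, hπTβ⟩
  have hαlt : ∀ d, α < θu d := (Finset.mem_filter.1 hαmem).2
  have hβgt : ∀ d, θu d < β := (Finset.mem_filter.1 hβmem).2
  have hσα : σ ≤ α := Finset.le_max' Tα σ hσTα
  have hβσπ : β ≤ σ + Real.pi := Finset.min'_le Tβ _ hπTβ
  have hαβ : α < β := lt_trans (hαlt d0) (hβgt d0)
  have hβαπ : β - α ≤ Real.pi := by linarith
  -- no source angle strictly inside (α, β)
  have claimI : ∀ e, α < θσ e → θσ e < β → False := by
    intro e h1' h2'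
    have hφσπ : θσ e < σ + Real.pi := lt_of_lt_of_le h2' hβσπ
    have hθσT : θσ e ∈ T := by
      rw [hT]
      exact Finset.mem_insert_of_mem (Finset.mem_insert_of_mem
        (Finset.mem_image_of_mem θσ (Finset.mem_univ e)))
    have hneq : ∀ d, θu d ≠ θσ e := by
      intro d hEq
      apply hsnkS d e
      rw [← hθσmk e, ← hEq, humk d]
    obtain ⟨d1, hd1⟩ : ∃ d1, θu d1 < θσ e := by
      by_contra h
      push_neg at h
      have : θσ e ∈ Tα := by
        rw [hTα, Finset.mem_filter]
        exact ⟨hθσT, fun d => lt_of_le_of_ne (h d) (fun hh => hneq d hh.symm)⟩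
      have := Finset.le_max' Tα _ this
      rw [← hα] at this
      linarith
    obtain ⟨d2, hd2⟩ : ∃ d2, θσ e < θu d2 := by
      by_contra h
      push_neg at h
      have : θσ e ∈ Tβ := by
        rw [hTβ, Finset.mem_filter]
        exact ⟨hθσT, fun d => lt_of_le_of_ne (h d) (hneq d)⟩
      have := Finset.min'_le Tβ _ this
      rw [← hβ] at this
      linarith
    exact separation srcs (snks d0) ⟨d0, hσmk⟩ ⟨e, (hθσmk e).symm⟩
      (hθu1 d1) hd1 hd2 (hθu2 d2)
      (by rw [humk d1]; exact hss d0 d1) (by rw [humk d2]; exact hss d0 d2)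
  -- master claim: any source rep in the window (α, α+π] lies in [β, α+π]
  have hstar : ∀ (e : Fin D) (θ : ℝ), α < θ → θ ≤ α + Real.pi →
      Projectivization.mk ℝ (rv θ) (rv_ne_zero θ) = srcs e → β ≤ θ := by
    intro e θ hθ1 hθ2 hmkθ
    obtain ⟨n, hn⟩ : ∃ n : ℤ, (n : ℝ) * Real.pi = θ - θσ e :=
      rv_parallel_angles (by rw [hmkθ, ← hθσmk e])
    have hb1 : -Real.pi < θ - θσ e := by
      have := hθσ2 e
      linarith
    have hb2 : θ - θσ e < 2 * Real.pi := by
      have := hθσ1 e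
      linarith
    have hn0 : (-1 : ℝ) < (n : ℝ) := by
      by_contra h
      push_neg at h
      nlinarith
    have hn2 : (n : ℝ) < 2 := by
      by_contra h
      push_neg at h
      nlinarith
    have hncases : n = 0 ∨ n = 1 := by
      have h1 : (-1 : ℤ) < n := by exact_mod_cast hn0
      have h2 : n < 2 := by exact_mod_cast hn2
      omega
    rcases hncases with h | h
    · -- θ = θσ e
      have hθeq : θ = θσ e := by rw [h] at hn; push_cast at hn; linarith
      by_contra hcon
      push_neg at hcon
      exact claimI e (hθeq ▸ hθ1) (hθeq ▸ hcon)
    · -- θ = θσ e + π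
      have hθeq : θ = θσ e + Real.pi := by rw [h] at hn; push_cast at hn; linarith
      have := hθσ1 e
      linarith
  -- choice of δ
  have hTune : (Finset.image (fun d => min (θu d - α) (β - θu d)) Finset.univ).Nonempty :=
    ⟨_, Finset.mem_image_of_mem _ (Finset.mem_univ d0)⟩
  set m := (Finset.image (fun d => min (θu d - α) (β - θu d)) Finset.univ).min' hTune with hm
  have hm_le : ∀ d, m ≤ min (θu d - α) (β - θu d) :=
    fun d => Finset.min'_le _ _ (Finset.mem_image_of_mem _ (Finset.mem_univ d))
  have hm_pos : 0 < m := by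
    obtain ⟨d, _, hd⟩ := Finset.mem_image.1 (Finset.min'_mem _ hTune)
    rw [hm, ← hd]
    exact lt_min (by linarith [hαlt d]) (by linarith [hβgt d])
  set δ := min m (β - α) / 3 with hδdef
  have hδpos : 0 < δ := by
    rw [hδdef]
    have : 0 < min m (β - α) := lt_min hm_pos (by linarith)
    linarith
  have hδm : δ < m := by
    rw [hδdef]
    have h1 : min m (β - α) ≤ m := min_le_left _ _
    linarith
  have h2δ : 2 * δ < β - α := by
    rw [hδdef]
    have h1 : min m (β - α) ≤ β - α := min_le_right _ _
    have : 0 < min m (β - α) := lt_min hm_pos (by linarith)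
    linarith
  have hδ1 : ∀ d, α + δ < θu d := by
    intro d
    have := hm_le d
    have := min_le_left (θu d - α) (β - θu d)
    linarith
  have hδ2 : ∀ d, θu d < β - δ := by
    intro d
    have := hm_le d
    have := min_le_right (θu d - α) (β - θu d)
    linarith
  -- the cone
  set P : E2 := rv (α + δ) with hPdef
  set Q : E2 := rv (β - δ) with hQdef
  have hPQpos : 0 < cx P Q := by
    rw [hPdef, hQdef, cx_rv]
    apply Real.sin_pos_of_pos_of_lt_pi <;> linarith
  -- the three sign facts for every matrix of the family
  have hfinal : ∀ d,
      0 < cx P (mulVecE (A d : Matrix (Fin 2) (Fin 2) ℝ) P)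
        * cx (mulVecE (A d : Matrix (Fin 2) (Fin 2) ℝ) P) Q ∧
      0 < cx P (mulVecE (A d : Matrix (Fin 2) (Fin 2) ℝ) Q)
        * cx (mulVecE (A d : Matrix (Fin 2) (Fin 2) ℝ) Q) Q ∧
      0 < cx P (mulVecE (A d : Matrix (Fin 2) (Fin 2) ℝ) P)
        * cx (mulVecE (A d : Matrix (Fin 2) (Fin 2) ℝ) Q) Q
        + cx P (mulVecE (A d : Matrix (Fin 2) (Fin 2) ℝ) Q)
        * cx (mulVecE (A d : Matrix (Fin 2) (Fin 2) ℝ) P) Q := by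
    intro d
    obtain ⟨ξ, v, hξ, hveq, hvne, hvmk⟩ := hsrc d
    obtain ⟨θ, hθmem, heig, hmk⟩ := eig_of_spans hvne hveq α
    have hθβ : β ≤ θ := hstar d θ hθmem.1 hθmem.2 (by rw [← hmk]; exact hvmk)
    obtain ⟨htu, _⟩ := eigen_product (hdet d) heig (hueig d) hξ (hξu d)
    exact key_signs heig (hueig d) hξ htu hβαπ hδpos h2δ (hδ1 d) (hδ2 d) hθβ hθmem.2
  -- define the invariant cone
  refine ⟨{x : RP1 | 0 < cx P x.rep * cx x.rep Q}, ?_, ?_, ?_, ?_⟩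
  · -- nonempty
    refine ⟨Projectivization.mk ℝ (rv (θu d0)) (rv_ne_zero _), ?_⟩
    have hval : 0 < cx P (rv (θu d0)) * cx (rv (θu d0)) Q := by
      rw [hPdef, hQdef, cx_rv, cx_rv]
      have h1 : 0 < Real.sin (θu d0 - (α + δ)) := by
        apply Real.sin_pos_of_pos_of_lt_pi
        · linarith [hδ1 d0]
        · linarith [hδ2 d0, hδpos]
      have h2 : 0 < Real.sin (β - δ - θu d0) := by
        apply Real.sin_pos_of_pos_of_lt_pi
        · linarith [hδ2 d0]
        · linarith [hδ1 d0, hδpos]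
      exact mul_pos h1 h2
    exact (sign_transfer (fun v => cx P v * cx v Q) (cx_prod_homog P Q)
      (rv_ne_zero (θu d0)) rfl).1.mpr hval
  · -- open
    exact isOpen_pos_set _ (continuous_cx_prod P Q) (cx_prod_homog P Q)
  · -- closure not everything
    intro hcl
    have hclosed := isClosed_nonneg_set (fun v => cx P v * cx v Q)
      (continuous_cx_prod P Q) (cx_prod_homog P Q)
    have hsub : closure {x : RP1 | 0 < cx P x.rep * cx x.rep Q}
        ⊆ {x : RP1 | 0 ≤ cx P x.rep * cx x.rep Q} :=
      closure_minimal (fun x hx => show (0:ℝ) ≤ _ from le_of_lt hx) hclosed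
    have hzne : P - Q ≠ 0 := by
      intro h
      rw [sub_eq_zero] at h
      rw [h, cx_self] at hPQpos
      exact lt_irrefl 0 hPQpos
    have hzmem : Projectivization.mk ℝ (P - Q) hzne
        ∈ closure {x : RP1 | 0 < cx P x.rep * cx x.rep Q} := by
      rw [hcl]; exact Set.mem_univ _
    have hz := hsub hzmem
    have hz' : 0 ≤ cx P (P - Q) * cx (P - Q) Q :=
      ((sign_transfer (fun v => cx P v * cx v Q) (cx_prod_homog P Q) hzne rfl).2).mp hz
    have hcomp : cx P (P - Q) * cx (P - Q) Q = -(cx P Q * cx P Q) := by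
      rw [cx_sub_left]
      rw [show cx P (P - Q) = cx P P - cx P Q from by
        rw [show P - Q = P + (-1 : ℝ) • Q from by module, cx_add_right, cx_smul_right]; ring]
      rw [cx_self, cx_self]
      ring
    rw [hcomp] at hz'
    nlinarith [hPQpos]
  · -- invariance
    intro d
    obtain ⟨T1, T2, T3⟩ := hfinal d
    have hdetd := hdet d
    set Bd : Matrix (Fin 2) (Fin 2) ℝ := (A d : Matrix (Fin 2) (Fin 2) ℝ) with hBd
    set BP : E2 := mulVecE Bd P with hBP
    set BQ : E2 := mulVecE Bd Q with hBQ
    have hDne : cx BP BQ ≠ 0 := by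
      rw [hBP, hBQ, cx_mulVecE, hdetd, one_mul]
      exact ne_of_gt hPQpos
    have hKclosed := isClosed_nonneg_set (fun v => cx BP v * cx v BQ)
      (continuous_cx_prod BP BQ) (cx_prod_homog BP BQ)
    have himg : matAct Bd '' {x : RP1 | 0 < cx P x.rep * cx x.rep Q}
        ⊆ {x : RP1 | 0 ≤ cx BP x.rep * cx x.rep BQ} := by
      rintro _ ⟨x, hx, rfl⟩
      have hxrep := (Projectivization.mk_rep x).symm
      rw [show matAct Bd x = Projectivization.mk ℝ (mulVecE Bd x.rep)
          (mulVecE_ne_zero hdetd x.rep_nonzero) from by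
        conv_lhs => rw [hxrep]
        exact matAct_mk hdetd x.rep_nonzero (mulVecE_ne_zero hdetd x.rep_nonzero)]
      refine Set.mem_setOf_eq ▸ ?_
      refine (sign_transfer (fun v => cx BP v * cx v BQ) (cx_prod_homog BP BQ)
        (mulVecE_ne_zero hdetd x.rep_nonzero) rfl).2.mpr ?_
      have h1 : cx BP (mulVecE Bd x.rep) = cx P x.rep := by
        rw [hBP, cx_mulVecE, hdetd, one_mul]
      have h2 : cx (mulVecE Bd x.rep) BQ = cx x.rep Q := by
        rw [hBQ, cx_mulVecE, hdetd, one_mul]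
      rw [h1, h2]
      exact le_of_lt hx
    have hclos : closure (matAct Bd '' {x : RP1 | 0 < cx P x.rep * cx x.rep Q})
        ⊆ {x : RP1 | 0 ≤ cx BP x.rep * cx x.rep BQ} :=
      closure_minimal himg hKclosed
    intro x hx
    have hxK := hclos hx
    exact cone_inclusion x.rep_nonzero hDne T1 T2 T3 hxK
end
end

section
/- Let A₁, …, A_D ∈ SL(2,ℝ), let χ : ℤ → Fin D be pseudo-ergodic, and suppose that |tr A_d| ≤ 2 for some d ∈ Fin D. Then the cocycle j ↦ A_{χ(j)} is not uniformly hyperbolic. -/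
open Matrix

noncomputable section

/-- A bi-infinite sequence is pseudo-ergodic if it contains every finite word. -/
def PseudoErgodicZ {D : ℕ} (χ : ℤ → Fin D) : Prop :=
  ∀ M : ℕ, 1 ≤ M → ∀ w : Fin M → Fin D, ∃ j : ℤ, ∀ k : Fin M, χ (j + (k : ℕ)) = w k


namespace Stmt8Aux

lemma mulVecE_mul (X Y : Matrix (Fin 2) (Fin 2) ℝ) (v : E2) :
    mulVecE (X * Y) v = mulVecE X (mulVecE Y v) := by
  simp [mulVecE, matLin, Matrix.mulVecLin_mul]

lemma mulVecE_one (v : E2) : mulVecE 1 v = v := by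
  simp [mulVecE, matLin, Matrix.mulVecLin_one]

lemma mulVecE_smul (a : ℝ) (X : Matrix (Fin 2) (Fin 2) ℝ) (v : E2) :
    mulVecE (a • X) v = a • mulVecE X v := by
  simp [mulVecE, matLin, Matrix.mulVecLin_apply, Matrix.smul_mulVec]
  ext i; fin_cases i <;> simp

lemma mulVecE_sub (X Y : Matrix (Fin 2) (Fin 2) ℝ) (v : E2) :
    mulVecE (X - Y) v = mulVecE X v - mulVecE Y v := by
  simp [mulVecE, matLin, Matrix.mulVecLin_apply, Matrix.sub_mulVec]
  ext i; fin_cases i <;> simp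

lemma norm_mulVecE_le (X : Matrix (Fin 2) (Fin 2) ℝ) (v : E2) :
    ‖mulVecE X v‖ ≤ matOpNorm X * ‖v‖ := by
  have h := (LinearMap.toContinuousLinearMap (matLin X)).le_opNorm v
  simpa [matOpNorm, mulVecE] using h

lemma matOpNorm_nonneg (X : Matrix (Fin 2) (Fin 2) ℝ) : 0 ≤ matOpNorm X := norm_nonneg _

def pseq (t : ℝ) : ℕ → ℝ
  | 0 => 0
  | 1 => 1
  | n + 2 => t * pseq t (n + 1) - pseq t n

lemma pseq_inv (t : ℝ) : ∀ n, (pseq t (n+1))^2 - t * pseq t (n+1) * pseq t n + (pseq t n)^2 = 1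
  | 0 => by simp [pseq]
  | n + 1 => by
    have ih := pseq_inv t n
    have h : pseq t (n+2) = t * pseq t (n+1) - pseq t n := rfl
    rw [h]; ring_nf; ring_nf at ih; nlinarith [ih]

lemma abs_pseq_succ_le (t : ℝ) (ht : |t| ≤ 2) (n : ℕ) :
    |pseq t (n+1)| ≤ |pseq t n| + 1 := by
  have h := pseq_inv t n
  set a := pseq t n
  set b := pseq t (n+1)
  have h1 : t * b * a ≤ 2 * (|b| * |a|) := by
    calc t * b * a ≤ |t * b * a| := le_abs_self _
    _ = |t| * (|b| * |a|) := by rw [abs_mul, abs_mul]; ring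
    _ ≤ 2 * (|b| * |a|) := by nlinarith [abs_nonneg b, abs_nonneg a, mul_nonneg (abs_nonneg b) (abs_nonneg a)]
  have h2 : (|b| - |a|)^2 ≤ 1 := by nlinarith [sq_abs a, sq_abs b]
  nlinarith [abs_nonneg a, abs_nonneg b, h2]

lemma abs_pseq_le (t : ℝ) (ht : |t| ≤ 2) : ∀ n, |pseq t n| ≤ n
  | 0 => by simp [pseq]
  | n + 1 => by
    have := abs_pseq_le t ht n
    have h := abs_pseq_succ_le t ht n
    push_cast
    linarith

lemma sq_eq (B : Matrix (Fin 2) (Fin 2) ℝ) (hdet : B.det = 1) :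
    B * B = B.trace • B - 1 := by
  rw [Matrix.det_fin_two] at hdet
  ext i j
  rw [Matrix.trace_fin_two]
  fin_cases i <;> fin_cases j <;>
    simp [Matrix.mul_apply, Fin.sum_univ_two, Matrix.one_apply, smul_eq_mul] <;>
    nlinarith [hdet]

lemma pow_eq (B : Matrix (Fin 2) (Fin 2) ℝ) (hdet : B.det = 1) :
    ∀ n : ℕ, B ^ (n + 1) = pseq B.trace (n + 1) • B - pseq B.trace n • 1
  | 0 => by simp [pseq]
  | n + 1 => by
    have ih := pow_eq B hdet n
    have hsq := sq_eq B hdet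
    have h : pseq B.trace (n+2) = B.trace * pseq B.trace (n+1) - pseq B.trace n := rfl
    rw [pow_succ, ih, h, sub_mul, smul_mul_assoc, smul_mul_assoc, one_mul, hsq]
    module

lemma growth (B : Matrix (Fin 2) (Fin 2) ℝ) (hdet : B.det = 1) (htr : |B.trace| ≤ 2)
    (n : ℕ) (v : E2) :
    ‖mulVecE (B ^ n) v‖ ≤ ((n : ℝ) + 1) * (matOpNorm B + 1) * ‖v‖ := by
  have hK : 0 ≤ matOpNorm B := matOpNorm_nonneg B
  have hv : 0 ≤ ‖v‖ := norm_nonneg v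
  cases n with
  | zero =>
    rw [pow_zero, mulVecE_one]
    push_cast
    nlinarith
  | succ n =>
    rw [pow_eq B hdet n, mulVecE_sub, mulVecE_smul, mulVecE_smul, mulVecE_one]
    have hp1 : |pseq B.trace (n+1)| ≤ (n:ℝ) + 1 := by
      have := abs_pseq_le B.trace htr (n+1); push_cast at this ⊢; linarith
    have hp0 : |pseq B.trace n| ≤ (n:ℝ) := abs_pseq_le B.trace htr n
    have hB := norm_mulVecE_le B v
    calc ‖pseq B.trace (n+1) • mulVecE B v - pseq B.trace n • v‖
        ≤ ‖pseq B.trace (n+1) • mulVecE B v‖ + ‖pseq B.trace n • v‖ := norm_sub_le _ _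
      _ = |pseq B.trace (n+1)| * ‖mulVecE B v‖ + |pseq B.trace n| * ‖v‖ := by
          rw [norm_smul, norm_smul, Real.norm_eq_abs, Real.norm_eq_abs]
      _ ≤ ((n:ℝ) + 1) * (matOpNorm B * ‖v‖) + (n:ℝ) * ‖v‖ := by
          have h2 : 0 ≤ ‖mulVecE B v‖ := norm_nonneg _
          have h3 : |pseq B.trace (n+1)| * ‖mulVecE B v‖ ≤ ((n:ℝ)+1) * (matOpNorm B * ‖v‖) := by
            apply mul_le_mul hp1 hB h2; positivity
          have h4 : |pseq B.trace n| * ‖v‖ ≤ (n:ℝ) * ‖v‖ :=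
            mul_le_mul_of_nonneg_right hp0 hv
          linarith
      _ ≤ ((n+1 : ℕ) + 1) * (matOpNorm B + 1) * ‖v‖ := by push_cast; nlinarith

lemma fwd_const (P : ℤ → Matrix (Fin 2) (Fin 2) ℝ) (B : Matrix (Fin 2) (Fin 2) ℝ) (j : ℤ) :
    ∀ M : ℕ, (∀ k : ℕ, k < M → P (j + (k : ℤ)) = B) → fwd P M j = B ^ M
  | 0, _ => by simp [fwd]
  | M + 1, h => by
    have ih := fwd_const P B j M (fun k hk => h k (Nat.lt_succ_of_lt hk))
    simp only [fwd, ih, h M (Nat.lt_succ_self M), pow_succ']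

lemma pow_mul_pow_eq_one {X Y : Matrix (Fin 2) (Fin 2) ℝ}
    (h1 : X * Y = 1) : ∀ n : ℕ, X ^ n * Y ^ n = 1
  | 0 => by simp
  | n + 1 => by
    rw [pow_succ X, pow_succ' Y, mul_assoc, ← mul_assoc X Y, h1, one_mul]
    exact pow_mul_pow_eq_one h1 n

end Stmt8Aux

theorem stmt_8 (D : ℕ) (A : Fin D → Matrix.SpecialLinearGroup (Fin 2) ℝ)
    (χ : ℤ → Fin D) (hχ : PseudoErgodicZ χ)
    (d : Fin D) (hd : |Matrix.trace (A d : Matrix (Fin 2) (Fin 2) ℝ)| ≤ 2) :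
    ¬ IsUH (fun j => (A (χ j) : Matrix (Fin 2) (Fin 2) ℝ)) := by
  rintro ⟨u, s, hact, C, hC, η, hη, hUH⟩
  set P : ℤ → Matrix (Fin 2) (Fin 2) ℝ := fun j => (A (χ j) : Matrix (Fin 2) (Fin 2) ℝ) with hP
  set g := A d with hg
  set B : Matrix (Fin 2) (Fin 2) ℝ := (g : Matrix (Fin 2) (Fin 2) ℝ) with hB
  set Bi : Matrix (Fin 2) (Fin 2) ℝ :=
    ((g⁻¹ : Matrix.SpecialLinearGroup (Fin 2) ℝ) : Matrix (Fin 2) (Fin 2) ℝ) with hBi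
  have hdetB : B.det = 1 := g.prop
  have hdetBi : Bi.det = 1 := (g⁻¹).prop
  have hBiB : Bi * B = 1 := by
    rw [hBi, hB, ← Matrix.SpecialLinearGroup.coe_mul, inv_mul_cancel,
      Matrix.SpecialLinearGroup.coe_one]
  have htrBi : |Bi.trace| ≤ 2 := by
    have hsq := Stmt8Aux.sq_eq B hdetB
    have h1 : B * (B.trace • (1 : Matrix (Fin 2) (Fin 2) ℝ) - B) = 1 := by
      rw [mul_sub, mul_smul_comm, mul_one, hsq]
      abel
    have h2 : Bi = B.trace • 1 - B := by
      calc Bi = Bi * (B * (B.trace • 1 - B)) := by rw [h1, mul_one]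
        _ = (Bi * B) * (B.trace • 1 - B) := by rw [mul_assoc]
        _ = B.trace • 1 - B := by rw [hBiB, one_mul]
    have h3 : (B.trace • (1 : Matrix (Fin 2) (Fin 2) ℝ) - B).trace = B.trace := by
      rw [Matrix.trace_sub, Matrix.trace_smul, Matrix.trace_one]
      simp
      ring
    rw [h2, h3]
    exact hd
  set K := matOpNorm Bi + 1 with hKdef
  have hK0 : (0:ℝ) < K := by
    have := Stmt8Aux.matOpNorm_nonneg Bi; rw [hKdef]; linarith
  have hη0 : (0:ℝ) < η := lt_trans one_pos hη
  have hr0 : (0:ℝ) ≤ 1/η := by positivity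
  have hr1 : 1/η < 1 := by rw [div_lt_one hη0]; exact hη
  have t1 := tendsto_self_mul_const_pow_of_lt_one hr0 hr1
  have t2 := tendsto_pow_atTop_nhds_zero_of_lt_one hr0 hr1
  have t3 : Filter.Tendsto (fun n : ℕ => ((n:ℝ)+1) * K * C * (1/η)^n)
      Filter.atTop (nhds 0) := by
    have h := (t1.add t2).const_mul (K*C)
    simp only [add_zero, mul_zero] at h
    exact h.congr (fun n => by ring)
  have hev : ∀ᶠ n : ℕ in Filter.atTop, ((n:ℝ)+1) * K * C * (1/η)^n < 1 :=
    t3.eventually_lt_const one_pos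
  obtain ⟨M, hMlt, hM1⟩ := ((hev.and (Filter.eventually_ge_atTop 1)).exists)
  obtain ⟨j, hj⟩ := hχ M hM1 (fun _ => d)
  have hconst : ∀ k : ℕ, k < M → P (j + (k : ℤ)) = B := by
    intro k hk
    have h := hj ⟨k, hk⟩
    simp only [Fin.val_mk] at h
    simp only [hP]
    rw [h, ← hg, ← hB]
  have hfwd : fwd P M j = B ^ M := Stmt8Aux.fwd_const P B j M hconst
  set v : E2 := (s j).rep with hv
  have hv0 : v ≠ 0 := Projectivization.rep_nonzero (s j)
  have hnv : ‖v‖ ≠ 0 := norm_ne_zero_iff.2 hv0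
  set w : E2 := ‖v‖⁻¹ • v with hw
  have hw0 : w ≠ 0 := smul_ne_zero (inv_ne_zero hnv) hv0
  have hw1 : ‖w‖ = 1 := by
    rw [hw, norm_smul, norm_inv, norm_norm, inv_mul_cancel₀ hnv]
  have hwspan : SpansLine w (s j) := by
    refine ⟨hw0, ?_⟩
    have hmk : Projectivization.mk ℝ w hw0 = Projectivization.mk ℝ v hv0 :=
      (Projectivization.mk_eq_mk_iff' ℝ w v hw0 hv0).2 ⟨‖v‖⁻¹, rfl⟩
    rw [hmk]
    exact Projectivization.mk_rep (s j)
  have hub := (hUH j M).2 w hw1 hwspan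
  rw [hfwd] at hub
  have hone : Bi ^ M * B ^ M = 1 := Stmt8Aux.pow_mul_pow_eq_one hBiB M
  have h0 : mulVecE (Bi ^ M) (mulVecE (B ^ M) w) = w := by
    rw [← Stmt8Aux.mulVecE_mul, hone, Stmt8Aux.mulVecE_one]
  have h2 := Stmt8Aux.growth Bi hdetBi htrBi M (mulVecE (B ^ M) w)
  rw [h0, hw1, ← hKdef] at h2
  have h3 : ((M:ℝ)+1) * K * ‖mulVecE (B ^ M) w‖ ≤ ((M:ℝ)+1) * K * (C / η ^ M) := by
    apply mul_le_mul_of_nonneg_left hub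
    positivity
  have h4 : (1:ℝ) ≤ ((M:ℝ)+1) * K * (C / η ^ M) := le_trans h2 h3
  have h5 : ((M:ℝ)+1) * K * (C / η ^ M) = ((M:ℝ)+1) * K * C * (1/η)^M := by
    rw [one_div, inv_pow]
    ring
  rw [h5] at h4
  linarith
end
end
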